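/- Let n ≥ 0 be even. Let Λ = [[0,1],[−1,0]], let M be the single real Jordan block of size 2(n+1) with eigenvalues ±i (2×2 blocks Λ on the block diagonal, the 2×2 identity on the block superdiagonal, zero blocks elsewhere), let N = −(M^{−1})^T, and let B be the real matrix whose j-th column is N^{j−1}e_1 (j = 1, …, 2n+2). Write points of ℝ^{2(n+1)} as (x_0, y_0, …, x_n, y_n) and set z_k = x_k + i·y_k. Define F : ℝ^{2(n+1)} → ℂ by F(x) = (n!/2^n)·( 2^n·z_n − Σ_{l=1}^n 2^{n−l}·(−i)^l·conj(z_{n−l}) ). For 0 ≤ j ≤ 2n+1 set d_j = (n!/2^n)·Σ_{i=0}^n 2^i·C(i+j−1, i) and b_j = 2·n!·C(n+j−1, n) − d_j, with the convention C(−1,0) = 1. Then for every x ∈ ℝ^{2(n+1)}, writing s = B^{−1}x with components s_0, …, s_{2n+1}: Re F(x) = Σ_{r=0}^n (−1)^{n/2+r}·b_{2r}·s_{2r} and Im F(x) = Σ_{r=0}^n (−1)^{n/2+r}·d_{2r+1}·s_{2r+1}. -/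

import Mathlib

open Complex Matrix

noncomputable section StmtAux

/-- real part of `i^m` -/
def csg (m : ℕ) : ℝ := if m % 4 = 0 then 1 else if m % 4 = 2 then -1 else 0
/-- imaginary part of `i^m` -/
def sng (m : ℕ) : ℝ := if m % 4 = 1 then 1 else if m % 4 = 3 then -1 else 0

lemma csg_succ (m : ℕ) : csg (m + 1) = -sng m := by
  unfold csg sng
  have h := Nat.mod_lt m (show 0 < 4 by norm_num)
  have h2 : (m+1) % 4 = (m % 4 + 1) % 4 := by omega
  interval_cases h3 : m % 4 <;> simp_all <;> norm_num

lemma sng_succ (m : ℕ) : sng (m + 1) = csg m := by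
  unfold csg sng
  have h := Nat.mod_lt m (show 0 < 4 by norm_num)
  have h2 : (m+1) % 4 = (m % 4 + 1) % 4 := by omega
  interval_cases h3 : m % 4 <;> simp_all <;> norm_num

lemma I_pow_eq (m : ℕ) : (Complex.I) ^ m = (csg m : ℂ) + (sng m : ℂ) * Complex.I := by
  induction m with
  | zero => simp [csg, sng]
  | succ k ih =>
      rw [pow_succ, ih, csg_succ, sng_succ]
      push_cast
      ring_nf
      rw [Complex.I_sq]
      ring

lemma neg_I_pow_eq (m : ℕ) : (-Complex.I) ^ m = (csg m : ℂ) - (sng m : ℂ) * Complex.I := by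
  have : (-Complex.I) ^ m = (starRingEnd ℂ) (Complex.I ^ m) := by
    rw [map_pow, Complex.conj_I]
  rw [this, I_pow_eq]
  simp [Complex.ext_iff]

/-- the `a`-th real component of the `j`-th column of `B`. -/
def vB (j a : ℕ) : ℝ :=
  (if a % 2 = 0 then csg (j + a / 2) else sng (j + a / 2)) * ((j + a / 2 - 1).choose (a / 2) : ℝ)


variable {D : ℕ}

lemma sum_ite_nat (w : Fin D → ℝ) (c : ℝ) (P : Fin D → Prop) [DecidablePred P]
    (t : ℕ) (ht : t < D) (h : ∀ b, P b ↔ (b : ℕ) = t) :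
    (∑ b : Fin D, (if P b then c else 0) * w b) = c * w ⟨t, ht⟩ := by
  rw [Fintype.sum_eq_single (⟨t, ht⟩ : Fin D)]
  · rw [if_pos]; rw [h]
  · intro b hb
    rw [if_neg, zero_mul]
    rw [h]
    intro hc
    exact hb (Fin.ext hc)

lemma sum_ite_nat_zero (w : Fin D → ℝ) (c : ℝ) (P : Fin D → Prop) [DecidablePred P]
    (h : ∀ b, ¬ P b) :
    (∑ b : Fin D, (if P b then c else 0) * w b) = 0 := by
  apply Finset.sum_eq_zero
  intro b _
  rw [if_neg (h b), zero_mul]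

def Jblock' (n : ℕ) : Matrix (Fin (2 * (n + 1))) (Fin (2 * (n + 1))) ℝ :=
  Matrix.of fun a b =>
    if (a : ℕ) % 2 = 0 ∧ (b : ℕ) = (a : ℕ) + 1 then 1
    else if (a : ℕ) % 2 = 1 ∧ (a : ℕ) = (b : ℕ) + 1 then -1
    else if (b : ℕ) = (a : ℕ) + 2 then 1 else 0

lemma Jblock'_split (n : ℕ) (a b : Fin (2 * (n + 1))) :
    Jblock' n b a =
      (if (b : ℕ) % 2 = 0 ∧ (a : ℕ) = (b : ℕ) + 1 then (1:ℝ) else 0)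
      + (if (b : ℕ) % 2 = 1 ∧ (b : ℕ) = (a : ℕ) + 1 then (-1:ℝ) else 0)
      + (if (a : ℕ) = (b : ℕ) + 2 then (1:ℝ) else 0) := by
  unfold Jblock'
  simp only [Matrix.of_apply]
  split_ifs <;> first | omega | norm_num

lemma Jt_mulVec (n : ℕ) (w : Fin (2*(n+1)) → ℝ) (a : Fin (2*(n+1))) :
    ((Jblock' n)ᵀ.mulVec w) a =
      (if h : (a : ℕ) % 2 = 1 then w ⟨(a:ℕ)-1, by have := a.2; omega⟩ else 0) -
      (if h : (a : ℕ) % 2 = 0 then w ⟨(a:ℕ)+1, by have := a.2; omega⟩ else 0) +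
      (if h : 2 ≤ (a : ℕ) then w ⟨(a:ℕ)-2, by have := a.2; omega⟩ else 0) := by
  have expand : ((Jblock' n)ᵀ.mulVec w) a = ∑ b, Jblock' n b a * w b := by
    simp [Matrix.mulVec, dotProduct, Matrix.transpose_apply]
  rw [expand]
  have : ∀ b, Jblock' n b a * w b =
      (if (b : ℕ) % 2 = 0 ∧ (a : ℕ) = (b : ℕ) + 1 then (1:ℝ) else 0) * w b
      + (if (b : ℕ) % 2 = 1 ∧ (b : ℕ) = (a : ℕ) + 1 then (-1:ℝ) else 0) * w b
      + (if (a : ℕ) = (b : ℕ) + 2 then (1:ℝ) else 0) * w b := by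
    intro b; rw [Jblock'_split]; ring
  rw [Finset.sum_congr rfl (fun b _ => this b), Finset.sum_add_distrib,
    Finset.sum_add_distrib]
  have e3 : (∑ b : Fin (2*(n+1)), (if (a : ℕ) = (b : ℕ) + 2 then (1:ℝ) else 0) * w b)
      = if h : 2 ≤ (a : ℕ) then w ⟨(a:ℕ)-2, by have := a.2; omega⟩ else 0 := by
    rcases Nat.lt_or_ge (a : ℕ) 2 with hlt | hge
    · rw [sum_ite_nat_zero w 1 (fun b => (a : ℕ) = (b : ℕ) + 2) (by intro b; omega),
        dif_neg (by omega)]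
    · rw [sum_ite_nat w 1 (fun b => (a : ℕ) = (b : ℕ) + 2) ((a:ℕ)-2)
        (by have := a.2; omega) (by intro b; omega), dif_pos hge, one_mul]
  rw [e3]
  rcases Nat.even_or_odd (a : ℕ) with he | ho
  · have ha2 : (a : ℕ) % 2 = 0 := Nat.even_iff.mp he
    have e1 : (∑ b : Fin (2*(n+1)), (if ((b:ℕ) % 2 = 0 ∧ (a : ℕ) = (b : ℕ) + 1) then (1:ℝ) else 0) * w b)
        = 0 :=
      sum_ite_nat_zero w 1 _ (by intro b; rintro ⟨h1, h2⟩; omega)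
    have e2 : (∑ b : Fin (2*(n+1)), (if ((b:ℕ) % 2 = 1 ∧ (b : ℕ) = (a : ℕ) + 1) then (-1:ℝ) else 0) * w b)
        = -1 * w ⟨(a:ℕ)+1, by have := a.2; omega⟩ :=
      sum_ite_nat w (-1) _ ((a:ℕ)+1) (by have := a.2; have := ha2; omega) (by intro b; omega)
    rw [e1, e2, dif_pos ha2, dif_neg (show ¬((a:ℕ) % 2 = 1) from by omega)]
    ring
  · have ha2 : (a : ℕ) % 2 = 1 := Nat.odd_iff.mp ho
    have e1 : (∑ b : Fin (2*(n+1)), (if ((b:ℕ) % 2 = 0 ∧ (a : ℕ) = (b : ℕ) + 1) then (1:ℝ) else 0) * w b)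
        = 1 * w ⟨(a:ℕ)-1, by have := a.2; omega⟩ :=
      sum_ite_nat w 1 _ ((a:ℕ)-1) (by have := a.2; have := ha2; omega) (by intro b; omega)
    have e2 : (∑ b : Fin (2*(n+1)), (if ((b:ℕ) % 2 = 1 ∧ (b : ℕ) = (a : ℕ) + 1) then (-1:ℝ) else 0) * w b)
        = 0 :=
      sum_ite_nat_zero w (-1) _ (by intro b; rintro ⟨h1, h2⟩; omega)
    rw [e1, e2, dif_pos ha2, dif_neg (show ¬((a:ℕ) % 2 = 0) from by omega)]
    ring

lemma vB_even (j a : ℕ) (h : a % 2 = 0) :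
    vB j a = csg (j + a / 2) * ((j + a / 2 - 1).choose (a / 2) : ℝ) := by
  rw [vB, if_pos h]
lemma vB_odd (j a : ℕ) (h : a % 2 = 1) :
    vB j a = sng (j + a / 2) * ((j + a / 2 - 1).choose (a / 2) : ℝ) := by
  rw [vB, if_neg (by omega)]

lemma pascalR (m q : ℕ) : ((m+1).choose (q+1) : ℝ) = (m.choose q : ℝ) + (m.choose (q+1) : ℝ) := by
  exact_mod_cast Nat.choose_succ_succ m q

lemma vB_step (n j : ℕ) (a : Fin (2*(n+1))) :
    ((Jblock' n)ᵀ.mulVec (fun b : Fin (2*(n+1)) => vB (j+1) (b:ℕ))) a = - vB j (a:ℕ) := by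
  rw [Jt_mulVec]
  have hb : ∀ (m : ℕ) (h : m < 2*(n+1)),
      ((⟨m, h⟩ : Fin (2*(n+1))) : ℕ) = m := fun m h => rfl
  rcases Nat.even_or_odd (a:ℕ) with he | ho
  · have ha2 : (a:ℕ) % 2 = 0 := Nat.even_iff.mp he
    rw [dif_neg (show ¬((a:ℕ) % 2 = 1) from by omega), dif_pos ha2]
    by_cases hge : 2 ≤ (a:ℕ)
    · rw [dif_pos hge]; simp only [hb]
      obtain ⟨q, hq⟩ : ∃ q, (a:ℕ)/2 = q+1 := ⟨(a:ℕ)/2 - 1, by omega⟩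
      rw [vB_odd (j+1) ((a:ℕ)+1) (by omega), vB_even (j+1) ((a:ℕ)-2) (by omega),
        vB_even j (a:ℕ) ha2]
      rw [show ((a:ℕ)+1)/2 = q+1 from by omega, show ((a:ℕ)-2)/2 = q from by omega, hq]
      rw [show j+1+(q+1) = j+q+1+1 from by omega, show j+1+q = j+q+1 from by omega,
        show j+(q+1) = j+q+1 from by omega, show j+q+1+1-1 = j+q+1 from by omega,
        show j+q+1-1 = j+q from by omega]
      rw [sng_succ (j+q+1), pascalR (j+q) q]
      ring
    · rw [dif_neg hge]; simp only [hb]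
      have ha0 : (a:ℕ) = 0 := by omega
      rw [ha0]
      rw [vB_odd (j+1) 1 rfl, vB_even j 0 rfl]
      norm_num
      rw [sng_succ j]
  · have ha2 : (a:ℕ) % 2 = 1 := Nat.odd_iff.mp ho
    rw [dif_pos ha2, dif_neg (show ¬((a:ℕ) % 2 = 0) from by omega)]
    by_cases hge : 2 ≤ (a:ℕ)
    · rw [dif_pos hge]; simp only [hb]
      obtain ⟨q, hq⟩ : ∃ q, (a:ℕ)/2 = q+1 := ⟨(a:ℕ)/2 - 1, by omega⟩
      rw [vB_even (j+1) ((a:ℕ)-1) (by omega), vB_odd (j+1) ((a:ℕ)-2) (by omega),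
        vB_odd j (a:ℕ) ha2]
      rw [show ((a:ℕ)-1)/2 = q+1 from by omega, show ((a:ℕ)-2)/2 = q from by omega, hq]
      rw [show j+1+(q+1) = j+q+1+1 from by omega, show j+1+q = j+q+1 from by omega,
        show j+(q+1) = j+q+1 from by omega, show j+q+1+1-1 = j+q+1 from by omega,
        show j+q+1-1 = j+q from by omega]
      rw [csg_succ (j+q+1), pascalR (j+q) q]
      ring
    · rw [dif_neg hge]; simp only [hb]
      have ha1 : (a:ℕ) = 1 := by omega
      rw [ha1]
      rw [vB_even (j+1) 0 rfl, vB_odd j 1 rfl]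
      norm_num
      rw [csg_succ j]

lemma vB_ne_zero (a : ℕ) (h : a ≠ 0) : vB 0 a = 0 := by
  by_cases hp : a / 2 = 0
  · have ha1 : a = 1 := by omega
    subst ha1
    norm_num [vB, sng]
  · have hlt : 0 + a/2 - 1 < a/2 := by omega
    rw [vB, Nat.choose_eq_zero_of_lt hlt]
    simp

lemma vB_zero_eq (n : ℕ) :
    (fun a : Fin (2*(n+1)) => vB 0 (a:ℕ)) = Pi.single (0 : Fin (2*(n+1))) 1 := by
  funext a
  rw [Pi.single_apply]
  by_cases h : a = (0 : Fin (2*(n+1)))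
  · rw [if_pos h, h]
    norm_num [vB, csg]
  · rw [if_neg h]
    exact vB_ne_zero _ (by intro hc; apply h; ext; simp [hc])

lemma J_mulVec (n : ℕ) (y : Fin (2*(n+1)) → ℝ) (a : Fin (2*(n+1))) :
    ((Jblock' n).mulVec y) a =
      (if h : (a : ℕ) % 2 = 0 then y ⟨(a:ℕ)+1, by have := a.2; omega⟩ else 0) -
      (if h : (a : ℕ) % 2 = 1 then y ⟨(a:ℕ)-1, by have := a.2; omega⟩ else 0) +
      (if h : (a:ℕ)+2 < 2*(n+1) then y ⟨(a:ℕ)+2, h⟩ else 0) := by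
  have expand : ((Jblock' n).mulVec y) a = ∑ b, Jblock' n a b * y b := by
    simp [Matrix.mulVec, dotProduct]
  rw [expand]
  have this2 : ∀ b : Fin (2*(n+1)), Jblock' n a b * y b =
      (if (a : ℕ) % 2 = 0 ∧ (b : ℕ) = (a : ℕ) + 1 then (1:ℝ) else 0) * y b
      + (if (a : ℕ) % 2 = 1 ∧ (a : ℕ) = (b : ℕ) + 1 then (-1:ℝ) else 0) * y b
      + (if (b : ℕ) = (a : ℕ) + 2 then (1:ℝ) else 0) * y b := by
    intro b
    unfold Jblock'
    simp only [Matrix.of_apply]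
    split_ifs <;> first | omega | norm_num
  rw [Finset.sum_congr rfl (fun b _ => this2 b), Finset.sum_add_distrib,
    Finset.sum_add_distrib]
  have e3 : (∑ b : Fin (2*(n+1)), (if (b : ℕ) = (a : ℕ) + 2 then (1:ℝ) else 0) * y b)
      = if h : (a:ℕ)+2 < 2*(n+1) then y ⟨(a:ℕ)+2, h⟩ else 0 := by
    by_cases hlt : (a:ℕ)+2 < 2*(n+1)
    · rw [sum_ite_nat y 1 (fun b => (b : ℕ) = (a : ℕ) + 2) ((a:ℕ)+2) hlt
        (by intro b; constructor <;> (intro hh; omega)), dif_pos hlt, one_mul]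
    · rw [sum_ite_nat_zero y 1 (fun b => (b : ℕ) = (a : ℕ) + 2)
        (by intro b; have := b.2; omega), dif_neg hlt]
  rw [e3]
  rcases Nat.even_or_odd (a:ℕ) with he | ho
  · have ha2 : (a:ℕ) % 2 = 0 := Nat.even_iff.mp he
    have e1 : (∑ b : Fin (2*(n+1)), (if ((a:ℕ) % 2 = 0 ∧ (b : ℕ) = (a : ℕ) + 1) then (1:ℝ) else 0) * y b)
        = 1 * y ⟨(a:ℕ)+1, by have := a.2; omega⟩ :=
      sum_ite_nat y 1 _ ((a:ℕ)+1) (by have := a.2; omega)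
        (by intro b; constructor
            · rintro ⟨h1, h2⟩; omega
            · intro hh; exact ⟨ha2, hh⟩)
    have e2 : (∑ b : Fin (2*(n+1)), (if ((a:ℕ) % 2 = 1 ∧ (a : ℕ) = (b : ℕ) + 1) then (-1:ℝ) else 0) * y b)
        = 0 :=
      sum_ite_nat_zero y (-1) _ (by intro b; rintro ⟨h1, h2⟩; omega)
    rw [e1, e2, dif_pos ha2, dif_neg (show ¬((a:ℕ) % 2 = 1) from by omega)]
    ring
  · have ha2 : (a:ℕ) % 2 = 1 := Nat.odd_iff.mp ho
    have e1 : (∑ b : Fin (2*(n+1)), (if ((a:ℕ) % 2 = 0 ∧ (b : ℕ) = (a : ℕ) + 1) then (1:ℝ) else 0) * y b)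
        = 0 :=
      sum_ite_nat_zero y 1 _ (by intro b; rintro ⟨h1, h2⟩; omega)
    have e2 : (∑ b : Fin (2*(n+1)), (if ((a:ℕ) % 2 = 1 ∧ (a : ℕ) = (b : ℕ) + 1) then (-1:ℝ) else 0) * y b)
        = -1 * y ⟨(a:ℕ)-1, by have := a.2; omega⟩ :=
      sum_ite_nat y (-1) _ ((a:ℕ)-1) (by have := a.2; omega)
        (by intro b; constructor
            · rintro ⟨h1, h2⟩; omega
            · intro hh; constructor
              · exact ha2
              · omega)
    rw [e1, e2, dif_pos ha2, dif_neg (show ¬((a:ℕ) % 2 = 0) from by omega)]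
    ring

lemma J_det_ne_zero (n : ℕ) : (Jblock' n).det ≠ 0 := by
  intro h0
  obtain ⟨y, hy, hJy⟩ := (Matrix.exists_mulVec_eq_zero_iff).mpr h0
  apply hy
  have key : ∀ m : ℕ, ∀ b : Fin (2*(n+1)), 2*(n+1) - (b:ℕ) ≤ m → y b = 0 := by
    intro m
    induction m with
    | zero => intro b hb; have := b.2; omega
    | succ m ih =>
        intro b hb
        rcases Nat.even_or_odd (b:ℕ) with he | ho
        · -- use row a = b+1 (odd)
          have hblt : (b:ℕ) + 1 < 2*(n+1) := by
            have := b.2; have := Nat.even_iff.mp he; omega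
          set a : Fin (2*(n+1)) := ⟨(b:ℕ)+1, hblt⟩ with ha
          have ha2 : (a:ℕ) % 2 = 1 := by
            have := Nat.even_iff.mp he; simp [ha]; omega
          have hrow : ((Jblock' n).mulVec y) a = 0 := by rw [hJy]; rfl
          rw [J_mulVec] at hrow
          rw [dif_neg (show ¬((a:ℕ) % 2 = 0) from by omega), dif_pos ha2] at hrow
          have hb1 : (⟨(a:ℕ)-1, by have := a.2; omega⟩ : Fin (2*(n+1))) = b := by
            apply Fin.ext; simp [ha]
          rw [hb1] at hrow
          by_cases h2 : (a:ℕ)+2 < 2*(n+1)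
          · rw [dif_pos h2] at hrow
            have : y ⟨(a:ℕ)+2, h2⟩ = 0 := by
              apply ih; simp [ha]; omega
            rw [this] at hrow; linarith
          · rw [dif_neg h2] at hrow; linarith
        · -- b odd: use row a = b-1 (even)
          have hb1 : 1 ≤ (b:ℕ) := by have := Nat.odd_iff.mp ho; omega
          set a : Fin (2*(n+1)) := ⟨(b:ℕ)-1, by have := b.2; omega⟩ with ha
          have ha2 : (a:ℕ) % 2 = 0 := by
            have := Nat.odd_iff.mp ho; simp [ha]; omega
          have hrow : ((Jblock' n).mulVec y) a = 0 := by rw [hJy]; rfl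
          rw [J_mulVec] at hrow
          rw [dif_pos ha2, dif_neg (show ¬((a:ℕ) % 2 = 1) from by omega)] at hrow
          have hb2 : (⟨(a:ℕ)+1, by have := a.2; omega⟩ : Fin (2*(n+1))) = b := by
            apply Fin.ext; simp [ha]; omega
          rw [hb2] at hrow
          by_cases h2 : (a:ℕ)+2 < 2*(n+1)
          · rw [dif_pos h2] at hrow
            have : y ⟨(a:ℕ)+2, h2⟩ = 0 := by
              apply ih; simp [ha]; omega
            rw [this] at hrow; linarith
          · rw [dif_neg h2] at hrow; linarith
  funext b
  exact key (2*(n+1)) b (by omega)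

lemma col_formula (n : ℕ) (N : Matrix (Fin (2*(n+1))) (Fin (2*(n+1))) ℝ)
    (hN : N = -(Matrix.transpose (Jblock' n)⁻¹)) (j : ℕ) :
    (N ^ j).mulVec (Pi.single (0 : Fin (2*(n+1))) 1) = fun a : Fin (2*(n+1)) => vB j (a:ℕ) := by
  have hT : IsUnit ((Jblock' n)ᵀ).det := by
    rw [Matrix.det_transpose]
    exact (J_det_ne_zero n).isUnit
  have hNT : N = -(((Jblock' n)ᵀ)⁻¹) := by
    rw [hN, Matrix.transpose_nonsing_inv]
  have step : ∀ k : ℕ, N.mulVec (fun a : Fin (2*(n+1)) => vB k (a:ℕ))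
      = fun a : Fin (2*(n+1)) => vB (k+1) (a:ℕ) := by
    intro k
    have h1 : ((Jblock' n)ᵀ).mulVec (fun a : Fin (2*(n+1)) => vB (k+1) (a:ℕ))
        = -(fun a : Fin (2*(n+1)) => vB k (a:ℕ)) := by
      funext a
      rw [vB_step n k a]
      simp
    rw [hNT, Matrix.neg_mulVec]
    have h2 : (fun a : Fin (2*(n+1)) => vB k (a:ℕ))
        = -(((Jblock' n)ᵀ).mulVec (fun a : Fin (2*(n+1)) => vB (k+1) (a:ℕ))) := by
      rw [h1]; simp
    rw [h2, Matrix.mulVec_neg, neg_neg, Matrix.mulVec_mulVec,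
      Matrix.nonsing_inv_mul _ hT, Matrix.one_mulVec]
  induction j with
  | zero =>
      rw [pow_zero, Matrix.one_mulVec, vB_zero_eq]
  | succ k ih =>
      rw [pow_succ', ← Matrix.mulVec_mulVec, ih, step]



def Epoly (n j : ℕ) : Polynomial ℂ :=
  ∑ p ∈ Finset.range (n+1),
    Polynomial.C ((-Complex.I)^(j+p) * ((j+p-1).choose p : ℂ)) * Polynomial.X ^ p

lemma Epoly_coeff (n j p : ℕ) :
    (Epoly n j).coeff p =
      if p ≤ n then (-Complex.I)^(j+p) * ((j+p-1).choose p : ℂ) else 0 := by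
  rw [Epoly, Polynomial.finset_sum_coeff]
  simp only [Polynomial.coeff_C_mul, Polynomial.coeff_X_pow, mul_ite, mul_one, mul_zero]
  rw [Finset.sum_ite_eq (Finset.range (n+1)) p
    (fun q => ((-Complex.I)^(j+q) * ((j+q-1).choose q : ℂ)))]
  simp [Finset.mem_range, Nat.lt_succ_iff]

lemma negI_sq : (-Complex.I)^2 = -1 := by
  simp [pow_two]

lemma negI_cycle (m : ℕ) : (-Complex.I)^(m+2) = -((-Complex.I)^m) := by
  rw [pow_add, negI_sq]
  ring

lemma K2 (n j : ℕ) :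
    (Polynomial.X ^ (n+1) : Polynomial ℂ) ∣
      ((Polynomial.X - Polynomial.C Complex.I) * Epoly n (j+1) + Epoly n j) := by
  rw [Polynomial.X_pow_dvd_iff]
  intro d hd
  have hdn : d ≤ n := by omega
  rw [Polynomial.coeff_add, sub_mul, Polynomial.coeff_sub, Polynomial.coeff_C_mul]
  rcases Nat.eq_zero_or_pos d with h0 | hpos
  · subst h0
    rw [Polynomial.mul_coeff_zero, Polynomial.coeff_X_zero, zero_mul]
    rw [Epoly_coeff, Epoly_coeff, if_pos hdn, if_pos hdn]
    simp only [Nat.add_zero]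
    rw [Nat.add_sub_cancel, Nat.choose_zero_right, Nat.choose_zero_right]
    push_cast
    linear_combination ((-Complex.I)^j) * Complex.I_mul_I
  · obtain ⟨e, rfl⟩ : ∃ e, d = e + 1 := ⟨d - 1, by omega⟩
    rw [Polynomial.coeff_X_mul]
    rw [Epoly_coeff, Epoly_coeff, Epoly_coeff, if_pos (by omega), if_pos hdn, if_pos hdn]
    rw [show j + 1 + e = j + e + 1 from by omega,
      show j + 1 + (e + 1) = j + e + 2 from by omega,
      show j + (e + 1) = j + e + 1 from by omega,
      show j + e + 1 - 1 = j + e from by omega,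
      show j + e + 2 - 1 = j + e + 1 from by omega]
    have hch : (((j+e+1).choose (e+1) : ℕ) : ℂ)
        = (((j+e).choose e : ℕ) : ℂ) + (((j+e).choose (e+1) : ℕ) : ℂ) := by
      exact_mod_cast Nat.choose_succ_succ (j+e) e
    rw [hch, negI_cycle, pow_succ]
    ring

lemma K3 (n j : ℕ) :
    (Polynomial.X ^ (n+1) : Polynomial ℂ) ∣
      ((Polynomial.X - Polynomial.C Complex.I)^j * Epoly n j
        - Polynomial.C ((-1:ℂ)^j)) := by
  induction j with
  | zero =>
      rw [pow_zero, one_mul, pow_zero, Polynomial.X_pow_dvd_iff]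
      intro d hd
      rw [Polynomial.coeff_sub, Epoly_coeff, if_pos (by omega)]
      rcases Nat.eq_zero_or_pos d with h0 | hpos
      · subst h0
        norm_num
      · rw [Nat.choose_eq_zero_of_lt (show 0 + d - 1 < d from by omega)]
        rw [Polynomial.coeff_C, if_neg (by omega)]
        simp
  | succ k ih =>
      have hsignC : Polynomial.C ((-1:ℂ)^(k+1)) = -Polynomial.C ((-1:ℂ)^k) := by
        rw [show ((-1:ℂ))^(k+1) = -((-1:ℂ))^k from by rw [pow_succ]; ring, map_neg]
      have h : (Polynomial.X - Polynomial.C Complex.I)^(k+1) * Epoly n (k+1)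
            - Polynomial.C ((-1:ℂ)^(k+1))
          = (Polynomial.X - Polynomial.C Complex.I)^k
              * ((Polynomial.X - Polynomial.C Complex.I) * Epoly n (k+1) + Epoly n k)
            - ((Polynomial.X - Polynomial.C Complex.I)^k * Epoly n k
                - Polynomial.C ((-1:ℂ)^k)) := by
        rw [hsignC]
        ring
      rw [h]
      exact dvd_sub ((K2 n k).mul_left _) ih






lemma polySum_comp (s : Finset ℕ) (f : ℕ → Polynomial ℂ) (q : Polynomial ℂ) :
    (∑ j ∈ s, f j).comp q = ∑ j ∈ s, (f j).comp q := by
  have h := map_sum (Polynomial.compRingHom q) f s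
  simpa [Polynomial.coe_compRingHom_apply] using h

lemma sc_eq_zero (n : ℕ) (sc : ℕ → ℝ)
    (hrow : ∀ p : ℕ, p ≤ n →
      (∑ j ∈ Finset.range (2*(n+1)),
        (sc j : ℂ) * ((-Complex.I)^(j+p) * ((j+p-1).choose p : ℂ))) = 0) :
    ∀ j < 2*(n+1), sc j = 0 := by
  have hG : (∑ j ∈ Finset.range (2*(n+1)), Polynomial.C ((sc j : ℂ)) * Epoly n j) = 0 := by
    apply Polynomial.ext
    intro q
    rw [Polynomial.finset_sum_coeff, Polynomial.coeff_zero]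
    simp only [Polynomial.coeff_C_mul, Epoly_coeff]
    by_cases hq : q ≤ n
    · simp only [if_pos hq]
      exact hrow q hq
    · simp [if_neg hq]
  set P : Polynomial ℂ := ∑ j ∈ Finset.range (2*(n+1)),
      Polynomial.C ((-1:ℂ)^j * (sc j : ℂ)) * (Polynomial.X - Polynomial.C Complex.I)^(2*n+1-j)
      with hPdef
  have hdvdP : (Polynomial.X : Polynomial ℂ)^(n+1) ∣ P := by
    have h1 : ∀ j ∈ Finset.range (2*(n+1)), (Polynomial.X : Polynomial ℂ)^(n+1) ∣
        (Polynomial.C ((sc j : ℂ)) * ((Polynomial.X - Polynomial.C Complex.I)^(2*n+1-j) *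
          ((Polynomial.X - Polynomial.C Complex.I)^j * Epoly n j
            - Polynomial.C ((-1:ℂ)^j)))) :=
      fun j _ => ((K3 n j).mul_left _).mul_left _
    have h2 : (∑ j ∈ Finset.range (2*(n+1)),
        (Polynomial.C ((sc j : ℂ)) * ((Polynomial.X - Polynomial.C Complex.I)^(2*n+1-j) *
          ((Polynomial.X - Polynomial.C Complex.I)^j * Epoly n j
            - Polynomial.C ((-1:ℂ)^j)))))
        = (Polynomial.X - Polynomial.C Complex.I)^(2*n+1) *
            (∑ j ∈ Finset.range (2*(n+1)), Polynomial.C ((sc j : ℂ)) * Epoly n j) - P := by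
      rw [hPdef, Finset.mul_sum, ← Finset.sum_sub_distrib]
      apply Finset.sum_congr rfl
      intro j hj
      have hjlt : j < 2*(n+1) := Finset.mem_range.mp hj
      have hpow : (Polynomial.X - Polynomial.C Complex.I)^(2*n+1-j) *
          (Polynomial.X - Polynomial.C Complex.I)^j
          = (Polynomial.X - Polynomial.C Complex.I)^(2*n+1) := by
        rw [← pow_add]
        congr 1
        omega
      rw [Polynomial.C_mul, ← hpow]
      ring
    have h3 := Finset.dvd_sum h1
    rw [h2, hG, mul_zero, zero_sub] at h3
    exact (dvd_neg).mp h3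
  have hP2 : P.map (starRingEnd ℂ) = ∑ j ∈ Finset.range (2*(n+1)),
      Polynomial.C ((-1:ℂ)^j * (sc j : ℂ)) * (Polynomial.X + Polynomial.C Complex.I)^(2*n+1-j) := by
    have h := map_sum (Polynomial.mapRingHom (starRingEnd ℂ))
      (fun j => Polynomial.C ((-1:ℂ)^j * (sc j : ℂ)) *
        (Polynomial.X - Polynomial.C Complex.I)^(2*n+1-j)) (Finset.range (2*(n+1)))
    simp only [Polynomial.coe_mapRingHom] at h
    rw [hPdef, h]
    apply Finset.sum_congr rfl
    intro j _
    rw [Polynomial.map_mul, Polynomial.map_C, Polynomial.map_pow, Polynomial.map_sub,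
      Polynomial.map_X, Polynomial.map_C]
    congr 2
    · simp [_root_.map_mul, map_pow, Complex.conj_ofReal]
    · rw [Complex.conj_I, map_neg, sub_neg_eq_add]
  have hXC : (Polynomial.X : Polynomial ℂ) - Polynomial.C (2*Complex.I) + Polynomial.C Complex.I
      = Polynomial.X - Polynomial.C Complex.I := by
    rw [show (2*Complex.I) = Complex.I + Complex.I from two_mul _, map_add]
    ring
  have hPcomp : (P.map (starRingEnd ℂ)).comp (Polynomial.X - Polynomial.C (2*Complex.I)) = P := by
    rw [hP2, polySum_comp]
    rw [hPdef]
    apply Finset.sum_congr rfl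
    intro j _
    rw [Polynomial.mul_comp, Polynomial.C_comp, Polynomial.pow_comp, Polynomial.add_comp,
      Polynomial.X_comp, Polynomial.C_comp, hXC]
  have hdvd2 : ((Polynomial.X : Polynomial ℂ) - Polynomial.C (2*Complex.I))^(n+1) ∣ P := by
    obtain ⟨c, hc⟩ := hdvdP
    refine ⟨c.map (starRingEnd ℂ) |>.comp (Polynomial.X - Polynomial.C (2*Complex.I)), ?_⟩
    rw [← hPcomp]
    rw [show P.map (starRingEnd ℂ) = (Polynomial.X : Polynomial ℂ)^(n+1) *
        (c.map (starRingEnd ℂ)) from by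
      rw [hc, Polynomial.map_mul, Polynomial.map_pow, Polynomial.map_X]]
    rw [Polynomial.mul_comp, Polynomial.X_pow_comp]
  have hcop : IsCoprime ((Polynomial.X : Polynomial ℂ)^(n+1))
      (((Polynomial.X : Polynomial ℂ) - Polynomial.C (2*Complex.I))^(n+1)) := by
    have h0 : IsCoprime ((Polynomial.X : Polynomial ℂ) - Polynomial.C 0)
        (Polynomial.X - Polynomial.C (2*Complex.I)) :=
      Polynomial.isCoprime_X_sub_C_of_isUnit_sub (by
        simp only [zero_sub, isUnit_iff_ne_zero, ne_eq, neg_eq_zero, mul_eq_zero]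
        push_neg
        exact ⟨two_ne_zero, Complex.I_ne_zero⟩)
    have h1 := h0.pow (m := n+1) (n := n+1)
    simpa [map_zero, sub_zero] using h1
  have hdvd3 : ((Polynomial.X : Polynomial ℂ)^(n+1) *
      ((Polynomial.X : Polynomial ℂ) - Polynomial.C (2*Complex.I))^(n+1)) ∣ P :=
    hcop.mul_dvd hdvdP hdvd2
  have hP0 : P = 0 := by
    by_contra hne
    have hdeg := Polynomial.natDegree_le_of_dvd hdvd3 hne
    have hdegP : P.natDegree ≤ 2*n+1 := by
      apply Polynomial.natDegree_sum_le_of_forall_le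
      intro j hj
      refine le_trans (Polynomial.natDegree_C_mul_le _ _) ?_
      rw [Polynomial.natDegree_pow, Polynomial.natDegree_X_sub_C]
      omega
    have hdegp : ((Polynomial.X : Polynomial ℂ)^(n+1) *
        ((Polynomial.X : Polynomial ℂ) - Polynomial.C (2*Complex.I))^(n+1)).natDegree
        = 2*n+2 := by
      rw [Polynomial.natDegree_mul (pow_ne_zero _ Polynomial.X_ne_zero)
        (pow_ne_zero _ (Polynomial.X_sub_C_ne_zero _)),
        Polynomial.natDegree_X_pow, Polynomial.natDegree_pow, Polynomial.natDegree_X_sub_C]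
      ring
    omega
  intro j0 hj0
  have hPc2 : P.comp (Polynomial.X + Polynomial.C Complex.I) = ∑ j ∈ Finset.range (2*(n+1)),
      Polynomial.C ((-1:ℂ)^j * (sc j : ℂ)) * Polynomial.X^(2*n+1-j) := by
    rw [hPdef, polySum_comp]
    apply Finset.sum_congr rfl
    intro j _
    rw [Polynomial.mul_comp, Polynomial.C_comp, Polynomial.pow_comp, Polynomial.sub_comp,
      Polynomial.X_comp, Polynomial.C_comp, add_sub_cancel_right]
  have h0 : (∑ j ∈ Finset.range (2*(n+1)),
      Polynomial.C ((-1:ℂ)^j * (sc j : ℂ)) * Polynomial.X^(2*n+1-j)).coeff (2*n+1-j0) = 0 := by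
    rw [← hPc2, hP0, Polynomial.zero_comp, Polynomial.coeff_zero]
  rw [Polynomial.finset_sum_coeff] at h0
  simp only [Polynomial.coeff_C_mul, Polynomial.coeff_X_pow] at h0
  rw [Finset.sum_eq_single j0] at h0
  · rw [if_pos rfl, mul_one] at h0
    have h1 : ((sc j0 : ℂ)) = 0 := by
      have hne : ((-1:ℂ))^j0 ≠ 0 := pow_ne_zero _ (by norm_num)
      rcases mul_eq_zero.mp h0 with h | h
      · exact absurd h hne
      · exact h
    exact_mod_cast h1
  · intro j hj hjne
    rw [if_neg (by have := Finset.mem_range.mp hj; omega), mul_zero]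
  · intro hmem
    exact absurd (Finset.mem_range.mpr hj0) hmem





def phiF (n j : ℕ) : ℂ := ((n.factorial : ℂ)/2^n) *
  ((2:ℂ)^n * (Complex.I^(j+n) * (((j+n-1).choose n : ℕ) : ℂ))
   - ∑ l ∈ Finset.Icc 1 n, (2:ℂ)^(n-l) * (-Complex.I)^l *
      ((-Complex.I)^(j+(n-l)) * (((j+(n-l)-1).choose (n-l) : ℕ) : ℂ)))

lemma reindex_Icc (n : ℕ) (g : ℕ → ℂ) :
    ∑ l ∈ Finset.Icc 1 n, g (n - l) = ∑ i ∈ Finset.range n, g i := by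
  apply Finset.sum_nbij' (fun l => n - l) (fun i => n - i)
  · intro l hl
    simp only [Finset.mem_Icc] at hl
    simp only [Finset.mem_range]
    omega
  · intro i hi
    simp only [Finset.mem_range] at hi
    simp only [Finset.mem_Icc]
    omega
  · intro l hl
    simp only [Finset.mem_Icc] at hl
    omega
  · intro i hi
    simp only [Finset.mem_range] at hi
    omega
  · intro l _
    rfl

lemma phiF_simp (n j : ℕ) :
    phiF n j = ((n.factorial : ℂ)/2^n) *
      ((2:ℂ)^n * (Complex.I^(j+n) * (((j+n-1).choose n : ℕ) : ℂ))
       - (-Complex.I)^(j+n) *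
          ∑ i ∈ Finset.range n, (2:ℂ)^i * (((j+i-1).choose i : ℕ) : ℂ)) := by
  rw [phiF]
  congr 2
  rw [Finset.mul_sum, ← reindex_Icc n (fun i => (-Complex.I)^(j+n) * ((2:ℂ)^i * (((j+i-1).choose i : ℕ) : ℂ)))]
  apply Finset.sum_congr rfl
  intro l hl
  simp only [Finset.mem_Icc] at hl
  have hpow : (-Complex.I)^l * (-Complex.I)^(j+(n-l)) = (-Complex.I)^(j+n) := by
    rw [← pow_add]
    congr 1
    omega
  calc (2:ℂ)^(n-l) * (-Complex.I)^l * ((-Complex.I)^(j+(n-l)) * (((j+(n-l)-1).choose (n-l) : ℕ) : ℂ))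
      = ((-Complex.I)^l * (-Complex.I)^(j+(n-l))) * ((2:ℂ)^(n-l) * (((j+(n-l)-1).choose (n-l) : ℕ) : ℂ)) := by ring
    _ = (-Complex.I)^(j+n) * ((2:ℂ)^(n-l) * (((j+(n-l)-1).choose (n-l) : ℕ) : ℂ)) := by rw [hpow]

lemma I_pow_two_mul (m : ℕ) : Complex.I^(2*m) = ((-1:ℂ))^m := by
  rw [pow_mul, Complex.I_sq]

lemma negI_pow_two_mul (m : ℕ) : (-Complex.I)^(2*m) = ((-1:ℂ))^m := by
  rw [pow_mul]
  norm_num [pow_two, Complex.I_mul_I]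

lemma phiF_even (n h r : ℕ) (hnh : n = h + h) (hr : r ≤ n)
    (d : ℕ → ℝ)
    (hd : ∀ j, d j = ((n.factorial : ℝ) / 2 ^ n) *
      ∑ i ∈ Finset.range (n + 1), 2 ^ i * ((i + j - 1).choose i : ℝ))
    (b : ℕ → ℝ)
    (hb : ∀ j, b j = 2 * (n.factorial : ℝ) * ((n + j - 1).choose n : ℝ) - d j) :
    phiF n (2*r) = (((-1:ℝ))^(n/2 + r) * b (2*r) : ℝ) := by
  rw [phiF_simp]
  have e1 : Complex.I^(2*r+n) = ((-1:ℂ))^(h+r) := by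
    rw [show 2*r+n = 2*(r+h) from by omega, I_pow_two_mul]
    rw [show r + h = h + r from by omega]
  have e2 : (-Complex.I)^(2*r+n) = ((-1:ℂ))^(h+r) := by
    rw [show 2*r+n = 2*(r+h) from by omega, negI_pow_two_mul]
    rw [show r + h = h + r from by omega]
  rw [e1, e2]
  rw [hb, hd]
  have hh : n / 2 = h := by omega
  rw [hh]
  have hsum : ∑ i ∈ Finset.range (n + 1), (2:ℝ) ^ i * ((i + 2*r - 1).choose i : ℝ)
      = (∑ i ∈ Finset.range n, (2:ℝ) ^ i * ((i + 2*r - 1).choose i : ℝ))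
        + 2^n * ((n + 2*r - 1).choose n : ℝ) := Finset.sum_range_succ _ _
  rw [hsum]
  have hA : (2*r+n-1).choose n = (n + 2*r - 1).choose n := by
    congr 1
    omega
  have hS : ∑ i ∈ Finset.range n, (2:ℂ)^i * (((2*r+i-1).choose i : ℕ) : ℂ)
      = ∑ i ∈ Finset.range n, (2:ℂ)^i * (((i + 2*r - 1).choose i : ℕ) : ℂ) := by
    apply Finset.sum_congr rfl
    intro i _
    congr 3
    omega
  rw [hA, hS]
  have h2n : ((2:ℂ))^n ≠ 0 := pow_ne_zero _ two_ne_zero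
  push_cast
  field_simp
  ring

lemma phiF_odd (n h r : ℕ) (hnh : n = h + h) (hr : r ≤ n)
    (d : ℕ → ℝ)
    (hd : ∀ j, d j = ((n.factorial : ℝ) / 2 ^ n) *
      ∑ i ∈ Finset.range (n + 1), 2 ^ i * ((i + j - 1).choose i : ℝ)) :
    phiF n (2*r+1) = ((((-1:ℝ))^(n/2 + r) * d (2*r+1) : ℝ) : ℂ) * Complex.I := by
  rw [phiF_simp]
  have e1 : Complex.I^(2*r+1+n) = ((-1:ℂ))^(h+r) * Complex.I := by
    rw [show 2*r+1+n = 2*(r+h)+1 from by omega, pow_succ, I_pow_two_mul]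
    rw [show r + h = h + r from by omega]
  have e2 : (-Complex.I)^(2*r+1+n) = -(((-1:ℂ))^(h+r) * Complex.I) := by
    rw [show 2*r+1+n = 2*(r+h)+1 from by omega, pow_succ, negI_pow_two_mul]
    rw [show r + h = h + r from by omega]
    ring
  rw [e1, e2]
  rw [hd]
  have hh : n / 2 = h := by omega
  rw [hh]
  have hsum : ∑ i ∈ Finset.range (n + 1), (2:ℝ) ^ i * ((i + (2*r+1) - 1).choose i : ℝ)
      = (∑ i ∈ Finset.range n, (2:ℝ) ^ i * ((i + (2*r+1) - 1).choose i : ℝ))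
        + 2^n * ((n + (2*r+1) - 1).choose n : ℝ) := Finset.sum_range_succ _ _
  rw [hsum]
  have hA : (2*r+1+n-1).choose n = (n + (2*r+1) - 1).choose n := by
    congr 1
    omega
  have hS : ∑ i ∈ Finset.range n, (2:ℂ)^i * (((2*r+1+i-1).choose i : ℕ) : ℂ)
      = ∑ i ∈ Finset.range n, (2:ℂ)^i * (((i + (2*r+1) - 1).choose i : ℕ) : ℂ) := by
    apply Finset.sum_congr rfl
    intro i _
    congr 3
    omega
  rw [hA, hS]
  have h2n : ((2:ℂ))^n ≠ 0 := pow_ne_zero _ two_ne_zero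
  push_cast
  field_simp
  ring

lemma sum_range_pair (m : ℕ) (f : ℕ → ℂ) :
    ∑ j ∈ Finset.range (2*m), f j = ∑ r ∈ Finset.range m, (f (2*r) + f (2*r+1)) := by
  induction m with
  | zero => simp
  | succ k ih =>
      rw [show 2*(k+1) = (2*k+1)+1 from by omega, Finset.sum_range_succ, Finset.sum_range_succ,
        Finset.sum_range_succ, ih]
      ring



/-- generic sum-exchange helper -/
lemma Fsum {m : ℕ} (s : Fin m → ℝ) (c u : ℂ) (T : Finset ℕ) (A : ℕ → ℂ)
    (w : ℕ → ℂ) (Bf : ℕ → ℕ → ℂ) :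
    c * (u * (∑ j : Fin m, (s j : ℂ) * A (j:ℕ))
      - ∑ l ∈ T, w l * (∑ j : Fin m, (s j : ℂ) * Bf l (j:ℕ)))
    = ∑ j : Fin m, (s j : ℂ) *
        (c * (u * A (j:ℕ) - ∑ l ∈ T, w l * Bf l (j:ℕ))) := by
  rw [mul_sub]
  rw [show c * (u * (∑ j : Fin m, (s j : ℂ) * A (j:ℕ)))
      = ∑ j : Fin m, c * (u * ((s j : ℂ) * A (j:ℕ))) from by
    rw [Finset.mul_sum, Finset.mul_sum]]
  rw [show c * (∑ l ∈ T, w l * (∑ j : Fin m, (s j : ℂ) * Bf l (j:ℕ)))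
      = ∑ l ∈ T, ∑ j : Fin m, c * (w l * ((s j : ℂ) * Bf l (j:ℕ))) from by
    simp only [Finset.mul_sum, mul_assoc]]
  rw [Finset.sum_comm, ← Finset.sum_sub_distrib]
  apply Finset.sum_congr rfl
  intro j _
  rw [mul_sub, mul_sub]
  congr 1
  · ring
  · rw [Finset.mul_sum, Finset.mul_sum]
    apply Finset.sum_congr rfl
    intro l _
    ring

end StmtAux

open Complex

/-- The single real Jordan block of size `2(n+1)` with eigenvalues `±i`:
`Λ = [[0,1],[−1,0]]` on the 2×2 block diagonal, the 2×2 identity on the 2×2 block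
superdiagonal, zero blocks elsewhere. -/
def Jblock (n : ℕ) : Matrix (Fin (2 * (n + 1))) (Fin (2 * (n + 1))) ℝ :=
  Matrix.of fun a b =>
    if (a : ℕ) % 2 = 0 ∧ (b : ℕ) = (a : ℕ) + 1 then 1
    else if (a : ℕ) % 2 = 1 ∧ (a : ℕ) = (b : ℕ) + 1 then -1
    else if (b : ℕ) = (a : ℕ) + 2 then 1 else 0

/-- `zc n k x = x_k + i y_k`, for points of `ℝ^{2(n+1)}` written `(x_0, y_0, …, x_n, y_n)`
(and `0` for `k > n`). -/
noncomputable def zc (n k : ℕ) (x : Fin (2 * (n + 1)) → ℝ) : ℂ :=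
  if h : k ≤ n then
    (x ⟨2 * k, by omega⟩ : ℂ) + Complex.I * (x ⟨2 * k + 1, by omega⟩ : ℂ)
  else 0

/-- Explicit form, in the companion-adapted coordinates `s = B⁻¹x`, of the solution
`F = F_n^{(1)}` of `∇f = M∇g` (`M` a single real Jordan block with eigenvalues `±i`,
`n` even): `Re F = Σ_r (−1)^{n/2+r} b_{2r} s_{2r}` and
`Im F = Σ_r (−1)^{n/2+r} d_{2r+1} s_{2r+1}`. -/
theorem stmt_13 (n : ℕ) (hn : Even n)
    (N : Matrix (Fin (2 * (n + 1))) (Fin (2 * (n + 1))) ℝ)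
    (hN : N = -(Matrix.transpose (Jblock n)⁻¹))
    (B : Matrix (Fin (2 * (n + 1))) (Fin (2 * (n + 1))) ℝ)
    (hB : B = Matrix.of fun i j : Fin (2 * (n + 1)) =>
      (N ^ (j : ℕ)).mulVec (Pi.single (0 : Fin (2 * (n + 1))) 1) i)
    (F : (Fin (2 * (n + 1)) → ℝ) → ℂ)
    (hF : ∀ x, F x = ((n.factorial : ℂ) / 2 ^ n) *
      (2 ^ n * zc n n x -
        ∑ l ∈ Finset.Icc 1 n,
          2 ^ (n - l) * (-Complex.I) ^ l * (starRingEnd ℂ) (zc n (n - l) x)))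
    (d : ℕ → ℝ)
    (hd : ∀ j, d j = ((n.factorial : ℝ) / 2 ^ n) *
      ∑ i ∈ Finset.range (n + 1), 2 ^ i * ((i + j - 1).choose i : ℝ))
    (b : ℕ → ℝ)
    (hb : ∀ j, b j = 2 * (n.factorial : ℝ) * ((n + j - 1).choose n : ℝ) - d j) :
    ∀ x : Fin (2 * (n + 1)) → ℝ,
      (F x).re = ∑ r : Fin (n + 1),
        (-1 : ℝ) ^ (n / 2 + (r : ℕ)) * b (2 * (r : ℕ)) *
          (B⁻¹.mulVec x) ⟨2 * (r : ℕ), by have := r.2; omega⟩ ∧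
      (F x).im = ∑ r : Fin (n + 1),
        (-1 : ℝ) ^ (n / 2 + (r : ℕ)) * d (2 * (r : ℕ) + 1) *
          (B⁻¹.mulVec x) ⟨2 * (r : ℕ) + 1, by have := r.2; omega⟩ := by
  intro x
  obtain ⟨h, hnh⟩ : ∃ h, n = h + h := hn
  have hN' : N = -(Matrix.transpose (Jblock' n)⁻¹) := hN
  have hBapply : ∀ (i j : Fin (2*(n+1))), B i j = vB (j:ℕ) (i:ℕ) := by
    intro i j
    rw [hB]
    show (N ^ (j:ℕ)).mulVec (Pi.single (0 : Fin (2*(n+1))) 1) i = _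
    rw [col_formula n N hN' (j:ℕ)]
  -- invertibility of B
  have hdetB : IsUnit B.det := by
    rw [isUnit_iff_ne_zero]
    intro h0
    obtain ⟨sv, hs0, hBs⟩ := Matrix.exists_mulVec_eq_zero_iff.mpr h0
    apply hs0
    have hrowF : ∀ a : Fin (2*(n+1)),
        (∑ j ∈ Finset.range (2*(n+1)), vB j (a:ℕ) *
          (if hj : j < 2*(n+1) then sv ⟨j, hj⟩ else 0)) = 0 := by
      intro a
      have h1 : (∑ j : Fin (2*(n+1)), B a j * sv j) = 0 := by
        have h2 := congrFun hBs a
        simpa [Matrix.mulVec, dotProduct] using h2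
      have h2 : (∑ j ∈ Finset.range (2*(n+1)), vB j (a:ℕ) *
          (if hj : j < 2*(n+1) then sv ⟨j, hj⟩ else 0))
          = ∑ j : Fin (2*(n+1)), B a j * sv j := by
        rw [← Fin.sum_univ_eq_sum_range
          (fun j => vB j (a:ℕ) * (if hj : j < 2*(n+1) then sv ⟨j, hj⟩ else 0)) (2*(n+1))]
        apply Finset.sum_congr rfl
        intro j _
        rw [hBapply, dif_pos j.2]
      rw [h2]
      exact h1
    have hrowC : ∀ p : ℕ, p ≤ n →
        (∑ j ∈ Finset.range (2*(n+1)),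
          ((if hj : j < 2*(n+1) then sv ⟨j, hj⟩ else 0 : ℝ) : ℂ) *
            ((-Complex.I)^(j+p) * ((j+p-1).choose p : ℂ))) = 0 := by
      intro p hp
      have hre := hrowF ⟨2*p, by omega⟩
      have him := hrowF ⟨2*p+1, by omega⟩
      have hv1 : ∀ j : ℕ, vB j (2*p) = csg (j+p) * ((j+p-1).choose p : ℝ) := by
        intro j
        rw [vB_even j (2*p) (by omega), show (2*p)/2 = p from by omega]
      have hv2 : ∀ j : ℕ, vB j (2*p+1) = sng (j+p) * ((j+p-1).choose p : ℝ) := by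
        intro j
        rw [vB_odd j (2*p+1) (by omega), show (2*p+1)/2 = p from by omega]
      have hsplit : (∑ j ∈ Finset.range (2*(n+1)),
          ((if hj : j < 2*(n+1) then sv ⟨j, hj⟩ else 0 : ℝ) : ℂ) *
            ((-Complex.I)^(j+p) * ((j+p-1).choose p : ℂ)))
          = ((∑ j ∈ Finset.range (2*(n+1)), vB j (2*p) *
              (if hj : j < 2*(n+1) then sv ⟨j, hj⟩ else 0) : ℝ) : ℂ)
            - ((∑ j ∈ Finset.range (2*(n+1)), vB j (2*p+1) *
              (if hj : j < 2*(n+1) then sv ⟨j, hj⟩ else 0) : ℝ) : ℂ) * Complex.I := by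
        push_cast
        rw [Finset.sum_mul, ← Finset.sum_sub_distrib]
        apply Finset.sum_congr rfl
        intro j hj
        rw [hv1 j, hv2 j, neg_I_pow_eq]
        push_cast
        ring
      rw [hsplit, hre, him]
      simp
    have hz := sc_eq_zero n (fun j => if hj : j < 2*(n+1) then sv ⟨j, hj⟩ else 0) hrowC
    funext c
    have h3 : (if hj : (c:ℕ) < 2*(n+1) then sv ⟨(c:ℕ), hj⟩ else 0) = 0 := hz (c:ℕ) c.2
    rw [dif_pos c.2] at h3
    simpa using h3
  -- expansion of x
  have hBB : B.mulVec (B⁻¹.mulVec x) = x := by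
    rw [Matrix.mulVec_mulVec, Matrix.mul_nonsing_inv B hdetB, Matrix.one_mulVec]
  set s : Fin (2*(n+1)) → ℝ := B⁻¹.mulVec x with hsdef
  have hxa : ∀ a : Fin (2*(n+1)), x a = ∑ j : Fin (2*(n+1)), vB (j:ℕ) (a:ℕ) * s j := by
    intro a
    conv_lhs => rw [← hBB]
    have : (B.mulVec s) a = ∑ j : Fin (2*(n+1)), B a j * s j := by
      simp [Matrix.mulVec, dotProduct]
    rw [this]
    apply Finset.sum_congr rfl
    intro j _
    rw [hBapply]
  have hzc : ∀ k : ℕ, k ≤ n → zc n k x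
      = ∑ j : Fin (2*(n+1)), (s j : ℂ) *
          (Complex.I^((j:ℕ)+k) * (((j:ℕ)+k-1).choose k : ℂ)) := by
    intro k hk
    rw [zc, dif_pos hk, hxa ⟨2*k, by omega⟩, hxa ⟨2*k+1, by omega⟩]
    push_cast
    rw [Finset.mul_sum, ← Finset.sum_add_distrib]
    apply Finset.sum_congr rfl
    intro j _
    rw [vB_even ((j:ℕ)) (2*k) (by omega), vB_odd ((j:ℕ)) (2*k+1) (by omega),
      show (2*k)/2 = k from by omega, show (2*k+1)/2 = k from by omega, I_pow_eq]
    push_cast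
    ring
  have hzcc : ∀ k : ℕ, k ≤ n → (starRingEnd ℂ) (zc n k x)
      = ∑ j : Fin (2*(n+1)), (s j : ℂ) *
          ((-Complex.I)^((j:ℕ)+k) * (((j:ℕ)+k-1).choose k : ℂ)) := by
    intro k hk
    rw [hzc k hk, map_sum]
    apply Finset.sum_congr rfl
    intro j _
    rw [_root_.map_mul, _root_.map_mul, map_pow]
    simp [Complex.conj_I, Complex.conj_ofReal]
  have hFx : F x = ∑ j : Fin (2*(n+1)), (s j : ℂ) * phiF n (j:ℕ) := by
    rw [hF x, hzc n le_rfl]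
    have hIcc : (∑ l ∈ Finset.Icc 1 n, (2:ℂ) ^ (n - l) * (-Complex.I) ^ l *
          (starRingEnd ℂ) (zc n (n - l) x))
        = ∑ l ∈ Finset.Icc 1 n, ((2:ℂ) ^ (n - l) * (-Complex.I) ^ l) *
          (∑ j : Fin (2*(n+1)), (s j : ℂ) *
            ((-Complex.I)^((j:ℕ)+(n-l)) * (((j:ℕ)+(n-l)-1).choose (n-l) : ℂ))) := by
      apply Finset.sum_congr rfl
      intro l _
      rw [hzcc (n-l) (Nat.sub_le n l)]
    rw [hIcc]
    rw [Fsum s ((n.factorial : ℂ) / 2 ^ n) ((2:ℂ)^n) (Finset.Icc 1 n)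
      (fun m => Complex.I^(m+n) * (((m+n-1).choose n : ℕ) : ℂ))
      (fun l => (2:ℂ) ^ (n - l) * (-Complex.I) ^ l)
      (fun l m => (-Complex.I)^(m+(n-l)) * (((m+(n-l)-1).choose (n-l) : ℕ) : ℂ))]
    apply Finset.sum_congr rfl
    intro j _
    rw [phiF]
  -- split into even/odd
  have hscx : ∀ (m : ℕ) (hm : m < 2*(n+1)),
      (if hj : m < 2*(n+1) then s ⟨m, hj⟩ else 0) = s ⟨m, hm⟩ := by
    intro m hm
    rw [dif_pos hm]
  have hFx2 : F x = ((∑ r ∈ Finset.range (n+1),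
        (if hj : 2*r < 2*(n+1) then s ⟨2*r, hj⟩ else 0) *
          ((-1:ℝ)^(n/2+r) * b (2*r)) : ℝ) : ℂ)
      + ((∑ r ∈ Finset.range (n+1),
        (if hj : 2*r+1 < 2*(n+1) then s ⟨2*r+1, hj⟩ else 0) *
          ((-1:ℝ)^(n/2+r) * d (2*r+1)) : ℝ) : ℂ) * Complex.I := by
    rw [hFx]
    rw [show (∑ j : Fin (2*(n+1)), (s j : ℂ) * phiF n (j:ℕ))
        = ∑ j ∈ Finset.range (2*(n+1)),
            (((if hj : j < 2*(n+1) then s ⟨j, hj⟩ else 0 : ℝ)) : ℂ) * phiF n j from by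
      rw [← Fin.sum_univ_eq_sum_range
        (fun j => (((if hj : j < 2*(n+1) then s ⟨j, hj⟩ else 0 : ℝ)) : ℂ) * phiF n j)
        (2*(n+1))]
      apply Finset.sum_congr rfl
      intro j _
      rw [hscx (j:ℕ) j.2]]
    rw [sum_range_pair (n+1)
      (fun j => (((if hj : j < 2*(n+1) then s ⟨j, hj⟩ else 0 : ℝ)) : ℂ) * phiF n j)]
    rw [Finset.sum_congr rfl (fun r hr => by
      have hrn : r ≤ n := by have := Finset.mem_range.mp hr; omega
      rw [phiF_even n h r hnh hrn d hd b hb, phiF_odd n h r hnh hrn d hd])]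
    push_cast
    rw [Finset.sum_mul, ← Finset.sum_add_distrib]
    apply Finset.sum_congr rfl
    intro r _
    ring
  constructor
  · rw [hFx2]
    simp only [Complex.add_re, Complex.ofReal_re, Complex.mul_re, Complex.I_re,
      Complex.ofReal_im, Complex.I_im, mul_zero, mul_one, zero_sub, sub_zero, neg_zero,
      add_zero, zero_mul]
    rw [← Fin.sum_univ_eq_sum_range
      (fun m => (if hj : 2*m < 2*(n+1) then s ⟨2*m, hj⟩ else 0) *
        ((-1:ℝ)^(n/2+m) * b (2*m))) (n+1)]
    apply Finset.sum_congr rfl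
    intro r _
    rw [hscx (2*(r:ℕ)) (by have := r.2; omega)]
    ring
  · rw [hFx2]
    simp only [Complex.add_im, Complex.ofReal_im, Complex.mul_im, Complex.I_re,
      Complex.I_im, Complex.ofReal_re, mul_zero, mul_one, zero_add, zero_mul, add_zero]
    rw [← Fin.sum_univ_eq_sum_range
      (fun m => (if hj : 2*m+1 < 2*(n+1) then s ⟨2*m+1, hj⟩ else 0) *
        ((-1:ℝ)^(n/2+m) * d (2*m+1))) (n+1)]
    apply Finset.sum_congr rfl
    intro r _
    rw [hscx (2*(r:ℕ)+1) (by have := r.2; omega)]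
    ring
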